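/- For every positive integer n: ∑_{k=1}^{n} (-1)^k · H_{n−k} / (k · binom(n, k)) = (1 − (-1)^n)/(n+1)^2 − H_n/(n+1), as an identity of rational numbers. -/

import Mathlib

/-- The `n`-th harmonic number as a rational number. -/
def Hq (n : ℕ) : ℚ := ∑ i ∈ Finset.range n, 1 / (i + 1)

/-- The `n`-th generalized harmonic number of order 2 as a rational number. -/
def H2q (n : ℕ) : ℚ := ∑ i ∈ Finset.range n, 1 / ((i : ℚ) + 1) ^ 2

lemma Hq_zero : Hq 0 = 0 := by simp [Hq]

lemma Hq_succ (n : ℕ) : Hq (n+1) = Hq n + 1 / ((n : ℚ) + 1) := by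
  simp [Hq, Finset.sum_range_succ]

lemma choose_ne (n k : ℕ) (h : k ≤ n) : ((n.choose k : ℚ)) ≠ 0 := by
  exact_mod_cast (Nat.choose_pos h).ne'

/-- 1/C(n,k) = (n+1)/(n+2) * (1/C(n+1,k) + 1/C(n+1,k+1)) -/
lemma key_split (n k : ℕ) (h : k ≤ n) :
    (1 : ℚ) / (n.choose k : ℚ) =
      ((n : ℚ) + 1) / ((n : ℚ) + 2) *
        (1 / ((n+1).choose k : ℚ) + 1 / ((n+1).choose (k+1) : ℚ)) := by
  have h1 : ((n : ℚ) + 1) * (n.choose k : ℚ) = ((n+1).choose (k+1) : ℚ) * ((k : ℚ) + 1) := by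
    exact_mod_cast congrArg (Nat.cast : ℕ → ℚ) (Nat.add_one_mul_choose_eq n k)
  have h2 : ((n : ℚ) + 2) * ((n+1).choose k : ℚ) = ((n+2).choose (k+1) : ℚ) * ((k : ℚ) + 1) := by
    exact_mod_cast congrArg (Nat.cast : ℕ → ℚ) (Nat.add_one_mul_choose_eq (n+1) k)
  have h3 : ((n+2).choose (k+1) : ℚ) = ((n+1).choose k : ℚ) + ((n+1).choose (k+1) : ℚ) := by
    exact_mod_cast congrArg (Nat.cast : ℕ → ℚ) (Nat.choose_succ_succ (n+1) k)
  have c0 := choose_ne n k h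
  have c1 := choose_ne (n+1) k (by omega)
  have c2 := choose_ne (n+1) (k+1) (by omega)
  have hn2 : ((n : ℚ) + 2) ≠ 0 := by positivity
  field_simp
  linear_combination (((n+1).choose (k+1) : ℚ)) * h2 + (((n+1).choose (k+1) : ℚ) * ((k : ℚ) + 1)) * h3 - ((((n+1).choose (k+1) : ℚ)) + (((n+1).choose k : ℚ))) * h1

/-- ((n-k)+1) * C(n+1,k) = (n+1) * C(n,k) as rationals, for k ≤ n. -/
lemma choose_drop (n k : ℕ) (h : k ≤ n) :
    (((n - k : ℕ) : ℚ) + 1) * ((n+1).choose k : ℚ) = ((n : ℚ) + 1) * (n.choose k : ℚ) := by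
  have hnat : n.choose k * (n+1) = (n+1).choose k * (n + 1 - k) := Nat.choose_mul_succ_eq n k
  have h2 : n + 1 - k = (n - k) + 1 := by omega
  rw [h2] at hnat
  have := congrArg (Nat.cast : ℕ → ℚ) hnat
  push_cast at this
  linarith [this]

lemma range_succ_eq_insert (n : ℕ) : Finset.range (n+1) = insert 0 (Finset.Icc 1 n) := by
  ext x; simp [Finset.mem_range, Finset.mem_Icc]; omega

/-- Full telescoped sum. -/
lemma Csum_full (n : ℕ) :
    ∑ k ∈ Finset.range (n+1), (-1 : ℚ) ^ k / (n.choose k : ℚ) =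
      ((n : ℚ) + 1) / ((n : ℚ) + 2) * (1 + (-1 : ℚ) ^ n) := by
  have step : ∀ k ∈ Finset.range (n+1),
      (-1 : ℚ) ^ k / (n.choose k : ℚ) =
        ((n : ℚ) + 1) / ((n : ℚ) + 2) *
          ((-1 : ℚ) ^ k * (1 / ((n+1).choose k : ℚ)) - (-1 : ℚ) ^ (k+1) * (1 / ((n+1).choose (k+1) : ℚ))) := by
    intro k hk
    have hk' : k ≤ n := by simpa [Nat.lt_succ_iff] using Finset.mem_range.mp hk
    rw [div_eq_mul_one_div, key_split n k hk']
    ring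
  rw [Finset.sum_congr rfl step, ← Finset.mul_sum,
    Finset.sum_range_sub' (fun k => (-1 : ℚ) ^ k * (1 / ((n+1).choose k : ℚ))) (n+1)]
  simp [Nat.choose_self, pow_succ]

lemma Csum (n : ℕ) :
    ∑ k ∈ Finset.Icc 1 n, (-1 : ℚ) ^ k / (n.choose k : ℚ) =
      ((n : ℚ) + 1) * (1 + (-1 : ℚ) ^ n) / ((n : ℚ) + 2) - 1 := by
  have h := Csum_full n
  rw [range_succ_eq_insert, Finset.sum_insert (by simp)] at h
  simp only [pow_zero, Nat.choose_zero_right, Nat.cast_one] at h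
  have hn2 : ((n : ℚ) + 2) ≠ 0 := by positivity
  field_simp at h ⊢
  linarith [h]

lemma Bsum (n : ℕ) :
    ∑ k ∈ Finset.Icc 1 n, (-1 : ℚ) ^ k * Hq (n - k) / (n.choose k : ℚ) =
      -((((n : ℚ) + 1) * (1 + (-1 : ℚ) ^ n) / ((n : ℚ) + 2) - 1) + Hq n) / ((n : ℚ) + 2) := by
  set g : ℕ → ℚ := fun j => (-1 : ℚ) ^ j * Hq (n + 1 - j) / (((n+1).choose j : ℚ)) with hg
  have hn1 : ((n : ℚ) + 1) ≠ 0 := by positivity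
  have hn2 : ((n : ℚ) + 2) ≠ 0 := by positivity
  -- split each term
  have step : ∀ k ∈ Finset.Icc 1 n,
      (-1 : ℚ) ^ k * Hq (n - k) / (n.choose k : ℚ) =
        ((n : ℚ) + 1) / ((n : ℚ) + 2) * ((-1 : ℚ) ^ k * Hq (n - k) / (((n+1).choose k : ℚ)))
        + ((n : ℚ) + 1) / ((n : ℚ) + 2) * ((-1 : ℚ) ^ k * Hq (n - k) / (((n+1).choose (k+1) : ℚ))) := by
    intro k hk
    have hk' : k ≤ n := (Finset.mem_Icc.mp hk).2
    rw [div_eq_mul_one_div ((-1 : ℚ) ^ k * Hq (n - k)), key_split n k hk']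
    rw [div_eq_mul_one_div ((-1 : ℚ) ^ k * Hq (n - k)), div_eq_mul_one_div ((-1 : ℚ) ^ k * Hq (n - k))]
    ring
  rw [Finset.sum_congr rfl step, Finset.sum_add_distrib, ← Finset.mul_sum, ← Finset.mul_sum]
  -- P part
  have hP : ∀ k ∈ Finset.Icc 1 n,
      (-1 : ℚ) ^ k * Hq (n - k) / (((n+1).choose k : ℚ)) =
        g k - (1 / ((n : ℚ) + 1)) * ((-1 : ℚ) ^ k / (n.choose k : ℚ)) := by
    intro k hk
    have hk' : k ≤ n := (Finset.mem_Icc.mp hk).2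
    have hsub : n + 1 - k = (n - k) + 1 := by omega
    have hd := choose_drop n k hk'
    have c0 := choose_ne n k hk'
    have c1 := choose_ne (n+1) k (by omega)
    have ha : (((n - k : ℕ) : ℚ) + 1) ≠ 0 := by positivity
    rw [hg]; simp only [hsub, Hq_succ]
    rw [Nat.cast_sub hk'] at hd ha
    rw [Nat.cast_sub hk']
    field_simp
    linear_combination hd
  have hQ : ∀ k ∈ Finset.Icc 1 n,
      (-1 : ℚ) ^ k * Hq (n - k) / (((n+1).choose (k+1) : ℚ)) = -(g (k+1)) := by
    intro k hk
    rw [hg]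
    simp only [Nat.succ_sub_succ, pow_succ]
    ring
  rw [Finset.sum_congr rfl hP, Finset.sum_congr rfl hQ, Finset.sum_sub_distrib,
    ← Finset.mul_sum, Csum n, Finset.sum_neg_distrib]
  -- shift the Q sum
  have hshift : ∑ k ∈ Finset.Icc 1 n, g (k+1) = ∑ j ∈ Finset.Icc 2 (n+1), g j := by
    rw [← Finset.map_add_right_Icc 1 n 1, Finset.sum_map]
    rfl
  have hX2 : ∑ j ∈ Finset.Icc 1 (n+1), g j = g 1 + ∑ j ∈ Finset.Icc 2 (n+1), g j := by
    rw [show Finset.Icc 1 (n+1) = insert 1 (Finset.Icc 2 (n+1)) from by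
      ext x; simp [Finset.mem_Icc]; omega, Finset.sum_insert (by simp)]
  have hXtop : ∑ j ∈ Finset.Icc 1 (n+1), g j = ∑ k ∈ Finset.Icc 1 n, g k := by
    rw [Finset.sum_Icc_succ_top (by omega)]
    have : g (n+1) = 0 := by simp [hg, Hq_zero]
    rw [this, add_zero]
  have hg1 : g 1 = -(Hq n) / ((n : ℚ) + 1) := by
    simp [hg, Nat.choose_one_right]
  have hgoal : ∑ k ∈ Finset.Icc 1 n, g (k+1) = Hq n / ((n : ℚ) + 1) + ∑ k ∈ Finset.Icc 1 n, g k := by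
    rw [hshift]
    have := hX2.symm.trans hXtop
    rw [hg1, neg_div] at this
    linarith [this]
  rw [hgoal]
  field_simp
  ring

lemma Asum (n : ℕ) :
    ∑ k ∈ Finset.Icc 1 n, (-1 : ℚ) ^ k / ((k : ℚ) * (n.choose k : ℚ)) =
      -(1 - (-1 : ℚ) ^ n) / ((n : ℚ) + 1) := by
  induction n with
  | zero => simp
  | succ n ih =>
    have hn1 : ((n : ℚ) + 1) ≠ 0 := by positivity
    have hn2 : ((n : ℚ) + 2) ≠ 0 := by positivity
    rw [Finset.sum_Icc_succ_top (by omega)]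
    have step : ∀ k ∈ Finset.Icc 1 n,
        (-1 : ℚ) ^ k / ((k : ℚ) * ((n+1).choose k : ℚ)) =
          (-1 : ℚ) ^ k / ((k : ℚ) * (n.choose k : ℚ))
            - (1 / ((n : ℚ) + 1)) * ((-1 : ℚ) ^ k / (n.choose k : ℚ)) := by
      intro k hk
      obtain ⟨hk1, hk2⟩ := Finset.mem_Icc.mp hk
      have hd := choose_drop n k hk2
      rw [Nat.cast_sub hk2] at hd
      have c0 := choose_ne n k hk2
      have c1 := choose_ne (n+1) k (by omega)
      have hkq : (k : ℚ) ≠ 0 := by positivity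
      have ha : ((n : ℚ) - (k : ℚ) + 1) ≠ 0 := by
        have : (k : ℚ) ≤ (n : ℚ) := by exact_mod_cast hk2
        linarith
      have hc1 : (((n+1).choose k : ℕ) : ℚ) = ((n : ℚ) + 1) * (n.choose k : ℚ) / ((n : ℚ) - k + 1) := by
        rw [eq_div_iff ha]; linear_combination hd
      rw [hc1]
      field_simp
      ring
    rw [Finset.sum_congr rfl step, Finset.sum_sub_distrib, ← Finset.mul_sum, ih, Csum n]
    simp only [Nat.choose_self, Nat.cast_one, mul_one, Nat.cast_add, pow_succ]
    rcases Nat.even_or_odd n with he | ho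
    · rw [he.neg_one_pow]
      push_cast
      field_simp
      ring
    · rw [ho.neg_one_pow]
      push_cast
      field_simp
      ring

theorem stmt_18_aux (n : ℕ) :
    ∑ k ∈ Finset.Icc 1 n, (-1 : ℚ) ^ k * Hq (n - k) / ((k : ℚ) * (Nat.choose n k : ℚ)) =
      (1 - (-1 : ℚ) ^ n) / ((n : ℚ) + 1) ^ 2 - Hq n / ((n : ℚ) + 1) := by
  induction n with
  | zero => simp [Hq_zero]
  | succ n ih =>
    have hn1 : ((n : ℚ) + 1) ≠ 0 := by positivity
    have hn2 : ((n : ℚ) + 2) ≠ 0 := by positivity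
    rw [Finset.sum_Icc_succ_top (by omega)]
    have htop : (-1 : ℚ) ^ (n+1) * Hq (n + 1 - (n+1)) / (((n+1 : ℕ) : ℚ) * ((n+1).choose (n+1) : ℚ)) = 0 := by
      simp [Hq_zero]
    rw [htop, add_zero]
    have step : ∀ k ∈ Finset.Icc 1 n,
        (-1 : ℚ) ^ k * Hq (n + 1 - k) / ((k : ℚ) * ((n+1).choose k : ℚ)) =
          ((-1 : ℚ) ^ k * Hq (n - k) / ((k : ℚ) * (n.choose k : ℚ))
            + (1 / ((n : ℚ) + 1)) * ((-1 : ℚ) ^ k / ((k : ℚ) * (n.choose k : ℚ))))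
            - (1 / ((n : ℚ) + 1)) * ((-1 : ℚ) ^ k * Hq (n - k) / (n.choose k : ℚ)) := by
      intro k hk
      obtain ⟨hk1, hk2⟩ := Finset.mem_Icc.mp hk
      have hsub : n + 1 - k = (n - k) + 1 := by omega
      have hd := choose_drop n k hk2
      rw [Nat.cast_sub hk2] at hd
      have c0 := choose_ne n k hk2
      have c1 := choose_ne (n+1) k (by omega)
      have hkq : (k : ℚ) ≠ 0 := by positivity
      have ha : ((n : ℚ) - (k : ℚ) + 1) ≠ 0 := by
        have : (k : ℚ) ≤ (n : ℚ) := by exact_mod_cast hk2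
        linarith
      have hc1 : (((n+1).choose k : ℕ) : ℚ) = ((n : ℚ) + 1) * (n.choose k : ℚ) / ((n : ℚ) - k + 1) := by
        rw [eq_div_iff ha]; linear_combination hd
      rw [hsub, Hq_succ, Nat.cast_sub hk2, hc1]
      field_simp
      ring
    rw [Finset.sum_congr rfl step, Finset.sum_sub_distrib, Finset.sum_add_distrib,
      ← Finset.mul_sum, ← Finset.mul_sum, ih, Asum n, Bsum n]
    rw [Hq_succ]
    simp only [pow_succ]
    push_cast
    rcases Nat.even_or_odd n with he | ho
    · rw [he.neg_one_pow]
      field_simp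
      ring
    · rw [ho.neg_one_pow]
      field_simp
      ring

theorem stmt_18 (n : ℕ) (hn : 0 < n) :
    ∑ k ∈ Finset.Icc 1 n, (-1 : ℚ) ^ k * Hq (n - k) / ((k : ℚ) * (Nat.choose n k : ℚ)) =
      (1 - (-1 : ℚ) ^ n) / ((n : ℚ) + 1) ^ 2 - Hq n / ((n : ℚ) + 1) := by
  exact stmt_18_aux n
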